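/- For any Boolean function f : {-1,1}^n → {-1,1} with I[f] < 1, Var(f) ≤ 2 · I[f] / log₂(1/I[f]). -/

import Mathlib

open Finset Real

noncomputable def chi {n : ℕ} (S : Finset (Fin n)) (x : Fin n → Bool) : ℝ :=
  ∏ i ∈ S, (if x i then (1:ℝ) else -1)

noncomputable def coeff {n : ℕ} (f : (Fin n → Bool) → ℝ) (S : Finset (Fin n)) : ℝ :=
  (∑ x : Fin n → Bool, f x * chi S x) / 2 ^ n

noncomputable def spectralEntropy {n : ℕ} (f : (Fin n → Bool) → ℝ) : ℝ :=
  ∑ S : Finset (Fin n), (coeff f S) ^ 2 * Real.logb 2 (1 / (coeff f S) ^ 2)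

noncomputable def totalInfluence {n : ℕ} (f : (Fin n → Bool) → ℝ) : ℝ :=
  ∑ S : Finset (Fin n), (S.card : ℝ) * (coeff f S) ^ 2

noncomputable def minEntropy {n : ℕ} (f : (Fin n → Bool) → ℝ) : ℝ :=
  ⨅ S : Finset (Fin n), Real.logb 2 (1 / (coeff f S) ^ 2)

noncomputable def fVar {n : ℕ} (f : (Fin n → Bool) → ℝ) : ℝ := 1 - (coeff f ∅) ^ 2

def IsBoolean {n : ℕ} (f : (Fin n → Bool) → ℝ) : Prop := ∀ x, f x = 1 ∨ f x = -1

noncomputable def binEnt (x : ℝ) : ℝ :=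
  x * Real.logb 2 (1 / x) + (1 - x) * Real.logb 2 (1 / (1 - x))

noncomputable def l1Norm {n : ℕ} (f : (Fin n → Bool) → ℝ) : ℝ :=
  ∑ S : Finset (Fin n), |coeff f S|

noncomputable def tensor {n m : ℕ} (f : (Fin n → Bool) → ℝ) (g : (Fin m → Bool) → ℝ) :
    (Fin (n + m) → Bool) → ℝ :=
  fun x => f (fun i => x (Fin.castAdd m i)) * g (fun j => x (Fin.natAdd n j))

/-! ### Auxiliary development -/

section Fourier

lemma chi_empty {n : ℕ} (x : Fin n → Bool) : chi ∅ x = 1 := by simp [chi]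

lemma sum_chi_mul_chi {n : ℕ} (x y : Fin n → Bool) :
    ∑ S : Finset (Fin n), chi S x * chi S y = if x = y then (2:ℝ)^n else 0 := by
  have h1 : ∀ S : Finset (Fin n), chi S x * chi S y
      = ∏ i ∈ S, ((if x i then (1:ℝ) else -1) * (if y i then (1:ℝ) else -1)) := by
    intro S; rw [chi, chi, ← Finset.prod_mul_distrib]
  have h2 : ∑ S : Finset (Fin n), chi S x * chi S y
      = ∏ i : Fin n, ((if x i then (1:ℝ) else -1) * (if y i then (1:ℝ) else -1) + 1) := by
    rw [Finset.prod_add]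
    rw [Finset.powerset_univ]
    refine Finset.sum_congr rfl fun S _ => ?_
    rw [h1 S]; simp
  rw [h2]
  by_cases hxy : x = y
  · subst hxy
    simp only [if_pos rfl]
    have : ∀ i : Fin n, ((if x i then (1:ℝ) else -1) * (if x i then (1:ℝ) else -1) + 1) = 2 := by
      intro i; by_cases h : x i <;> simp [h] <;> norm_num
    rw [Finset.prod_congr rfl (fun i _ => this i)]
    simp
  · rw [if_neg hxy]
    obtain ⟨i, hi⟩ : ∃ i, x i ≠ y i := by
      by_contra h; push_neg at h; exact hxy (funext h)
    apply Finset.prod_eq_zero (Finset.mem_univ i)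
    rcases Bool.eq_false_or_eq_true (x i) with h | h <;>
      rcases Bool.eq_false_or_eq_true (y i) with h' | h' <;>
      simp [h, h'] at hi ⊢

lemma inversion {n : ℕ} (g : (Fin n → Bool) → ℝ) (x : Fin n → Bool) :
    ∑ S : Finset (Fin n), coeff g S * chi S x = g x := by
  simp only [coeff, div_mul_eq_mul_div, Finset.sum_mul, ← Finset.sum_div]
  rw [Finset.sum_comm]
  have : ∀ y : Fin n → Bool, ∑ S : Finset (Fin n), g y * chi S y * chi S x
      = g y * (if y = x then (2:ℝ)^n else 0) := by
    intro y
    simp only [mul_assoc, ← Finset.mul_sum]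
    congr 1
    exact sum_chi_mul_chi y x
  rw [Finset.sum_congr rfl fun y _ => this y]
  simp only [mul_ite, mul_zero]
  rw [Finset.sum_ite_eq' Finset.univ x (fun y => g y * 2^n)]
  simp

lemma parseval {n : ℕ} (g : (Fin n → Bool) → ℝ) :
    ∑ S : Finset (Fin n), (coeff g S)^2 = (∑ x : Fin n → Bool, (g x)^2) / 2^n := by
  have : ∀ S : Finset (Fin n), (coeff g S)^2
      = (∑ x : Fin n → Bool, coeff g S * (g x * chi S x)) / 2^n := by
    intro S
    rw [← Finset.mul_sum]
    have h2 : (∑ x : Fin n → Bool, g x * chi S x) = coeff g S * 2^n := by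
      rw [coeff]
      field_simp
    rw [h2]
    have : (2:ℝ)^n ≠ 0 := by positivity
    field_simp
  rw [Finset.sum_congr rfl fun S _ => this S, ← Finset.sum_div]
  congr 1
  rw [Finset.sum_comm]
  refine Finset.sum_congr rfl fun x _ => ?_
  have : ∀ S : Finset (Fin n), coeff g S * (g x * chi S x) = g x * (coeff g S * chi S x) := by
    intro S; ring
  rw [Finset.sum_congr rfl fun S _ => this S, ← Finset.mul_sum, inversion]
  ring

lemma coeff_comb {n : ℕ} (f g : (Fin n → Bool) → ℝ) (S : Finset (Fin n)) :
    coeff (fun y => (f y - g y)/2) S = (coeff f S - coeff g S)/2 := by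
  have h : (∑ x : Fin n → Bool, (f x - g x)/2 * chi S x)
      = ((∑ x : Fin n → Bool, f x * chi S x) - (∑ x : Fin n → Bool, g x * chi S x))/2 := by
    rw [← Finset.sum_sub_distrib, Finset.sum_div]
    refine Finset.sum_congr rfl fun x _ => ?_
    ring
  rw [coeff, coeff, coeff, h]
  ring

lemma coeff_neg {n : ℕ} (f : (Fin n → Bool) → ℝ) (S : Finset (Fin n)) :
    coeff (fun y => -(f y)) S = - coeff f S := by
  rw [coeff, coeff, ← neg_div, ← Finset.sum_neg_distrib]
  congr 1
  refine Finset.sum_congr rfl fun x _ => ?_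
  ring

lemma boolean_parseval {n : ℕ} {g : (Fin n → Bool) → ℝ} (hg : IsBoolean g) :
    ∑ S : Finset (Fin n), (coeff g S)^2 = 1 := by
  rw [parseval]
  have h1 : ∀ x : Fin n → Bool, (g x)^2 = 1 := by
    intro x; rcases hg x with h | h <;> rw [h] <;> norm_num
  rw [Finset.sum_congr rfl fun x _ => h1 x, Finset.sum_const, Finset.card_univ,
    Fintype.card_fun]
  simp

lemma coeff_sq_le_one {n : ℕ} {g : (Fin n → Bool) → ℝ} (hg : IsBoolean g)
    (S : Finset (Fin n)) : (coeff g S)^2 ≤ 1 := by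
  rw [← boolean_parseval hg]
  exact Finset.single_le_sum (fun T _ => sq_nonneg (coeff g T)) (Finset.mem_univ S)

lemma influence_nonneg {n : ℕ} (f : (Fin n → Bool) → ℝ) : 0 ≤ totalInfluence f :=
  Finset.sum_nonneg fun S _ => mul_nonneg (Nat.cast_nonneg _) (sq_nonneg _)

lemma var_le_influence {n : ℕ} {f : (Fin n → Bool) → ℝ} (hf : IsBoolean f) :
    1 - (coeff f ∅)^2 ≤ totalInfluence f := by
  have hpar := boolean_parseval hf
  have h1 : 1 - (coeff f ∅)^2 = ∑ S ∈ Finset.univ.erase ∅, (coeff f S)^2 := by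
    rw [← hpar, ← Finset.add_sum_erase Finset.univ _ (Finset.mem_univ ∅)]
    ring
  rw [h1, totalInfluence]
  calc ∑ S ∈ Finset.univ.erase ∅, (coeff f S)^2
      ≤ ∑ S ∈ Finset.univ.erase ∅, (S.card : ℝ) * (coeff f S)^2 := by
        refine Finset.sum_le_sum fun S hS => ?_
        have hS' : S ≠ ∅ := (Finset.mem_erase.mp hS).1
        have hc : 1 ≤ S.card := Finset.one_le_card.mpr (Finset.nonempty_iff_ne_empty.mpr hS')
        have hc' : (1:ℝ) ≤ (S.card : ℝ) := by exact_mod_cast hc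
        nlinarith [sq_nonneg (coeff f S)]
    _ ≤ ∑ S : Finset (Fin n), (S.card : ℝ) * (coeff f S)^2 := by
        refine Finset.sum_le_sum_of_subset_of_nonneg (Finset.erase_subset _ _)
          fun S _ _ => mul_nonneg (Nat.cast_nonneg _) (sq_nonneg _)

lemma isBoolean_neg {n : ℕ} {f : (Fin n → Bool) → ℝ} (hf : IsBoolean f) :
    IsBoolean (fun x => -(f x)) := by
  intro x
  rcases hf x with h | h
  · right; show -(f x) = -1; rw [h]
  · left; show -(f x) = 1; rw [h]; norm_num

lemma influence_neg {n : ℕ} (f : (Fin n → Bool) → ℝ) :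
    totalInfluence (fun x => -(f x)) = totalInfluence f := by
  rw [totalInfluence, totalInfluence]
  refine Finset.sum_congr rfl fun S _ => ?_
  rw [coeff_neg]
  ring

end Fourier

section Split

variable {n : ℕ}

def up (S : Finset (Fin n)) : Finset (Fin (n+1)) := S.image Fin.succ

def tl (S : Finset (Fin (n+1))) : Finset (Fin n) := univ.filter (fun i => i.succ ∈ S)

lemma zero_not_mem_up (S : Finset (Fin n)) : (0 : Fin (n+1)) ∉ up S := by
  simp only [up, Finset.mem_image]
  rintro ⟨i, _, h⟩
  exact Fin.succ_ne_zero i h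

lemma mem_up {S : Finset (Fin n)} {i : Fin n} : i.succ ∈ up S ↔ i ∈ S := by
  simp only [up, Finset.mem_image]
  constructor
  · rintro ⟨j, hj, h⟩; rwa [← Fin.succ_injective n h]
  · exact fun h => ⟨i, h, rfl⟩

lemma up_empty : up (∅ : Finset (Fin n)) = ∅ := Finset.image_empty _

def emb (p : Bool × Finset (Fin n)) : Finset (Fin (n+1)) :=
  if p.1 then insert 0 (up p.2) else up p.2

lemma emb_bijective : Function.Bijective (emb (n := n)) := by
  rw [Function.bijective_iff_has_inverse]
  refine ⟨fun S => (decide ((0:Fin (n+1)) ∈ S), tl S), fun p => ?_, fun S => ?_⟩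
  · obtain ⟨b, S'⟩ := p
    have htl : ∀ b', tl (emb (b', S')) = S' := by
      intro b'
      ext i
      simp only [tl, Finset.mem_filter, Finset.mem_univ, true_and, emb]
      cases b' <;> simp [mem_up, Fin.succ_ne_zero]
    cases b
    · simp only [emb, if_neg Bool.false_ne_true]
      ext : 1
      · simp [zero_not_mem_up]
      · simpa [emb] using htl false
    · simp only [emb, if_pos rfl]
      ext : 1
      · simp
      · simpa [emb] using htl true
  · by_cases h0 : (0 : Fin (n+1)) ∈ S
    · simp only [emb, h0, decide_eq_true h0, if_pos rfl]
      ext j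
      cases j using Fin.cases with
      | zero => simp [h0]
      | succ i => simp [mem_up, tl, Fin.succ_ne_zero]
    · simp only [emb, h0, decide_eq_false h0, Bool.false_eq_true, if_neg]
      ext j
      cases j using Fin.cases with
      | zero => simp [h0, zero_not_mem_up]
      | succ i => simp [mem_up, tl]

lemma card_up (S : Finset (Fin n)) : (up S).card = S.card :=
  Finset.card_image_of_injective S (Fin.succ_injective n)

lemma card_insert_up (S : Finset (Fin n)) : (insert 0 (up S)).card = S.card + 1 := by
  rw [Finset.card_insert_of_notMem (zero_not_mem_up S), card_up]

lemma chi_up (S : Finset (Fin n)) (b : Bool) (y : Fin n → Bool) :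
    chi (up S) (Fin.cons b y) = chi S y := by
  rw [chi, up, Finset.prod_image (fun a _ b _ h => Fin.succ_injective n h)]
  refine Finset.prod_congr rfl fun i _ => ?_
  rw [Fin.cons_succ]

lemma chi_insert_up (S : Finset (Fin n)) (b : Bool) (y : Fin n → Bool) :
    chi (insert 0 (up S)) (Fin.cons b y) = (if b then 1 else -1) * chi S y := by
  rw [chi, Finset.prod_insert (zero_not_mem_up S), Fin.cons_zero, ← chi_up S b y]
  rfl

lemma sum_split (F : (Fin (n+1) → Bool) → ℝ) :
    ∑ x : Fin (n+1) → Bool, F x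
      = ∑ y : Fin n → Bool, F (Fin.cons false y) + ∑ y : Fin n → Bool, F (Fin.cons true y) := by
  rw [← Equiv.sum_comp (Fin.consEquiv (fun _ => Bool)) F]
  rw [Fintype.sum_prod_type]
  rw [Fintype.sum_bool]
  rw [add_comm]
  rfl

variable (f : (Fin (n+1) → Bool) → ℝ)

lemma coeff_up_eq (S : Finset (Fin n)) :
    coeff f (up S) = (coeff (fun y => f (Fin.cons false y)) S
      + coeff (fun y => f (Fin.cons true y)) S) / 2 := by
  rw [coeff, coeff, coeff, sum_split (fun x => f x * chi (up S) x)]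
  have h1 : ∀ b y, f (Fin.cons b y) * chi (up S) (Fin.cons b y)
      = f (Fin.cons b y) * chi S y := fun b y => by rw [chi_up]
  simp only [h1]
  rw [pow_succ]
  field_simp

lemma coeff_insert_up_eq (S : Finset (Fin n)) :
    coeff f (insert 0 (up S)) = (coeff (fun y => f (Fin.cons true y)) S
      - coeff (fun y => f (Fin.cons false y)) S) / 2 := by
  rw [coeff, coeff, coeff, sum_split (fun x => f x * chi (insert 0 (up S)) x)]
  have h1 : ∀ b y, f (Fin.cons b y) * chi (insert 0 (up S)) (Fin.cons b y)
      = f (Fin.cons b y) * ((if b then (1:ℝ) else -1) * chi S y) := fun b y => by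
    rw [chi_insert_up]
  have e2 : ∀ y, f (Fin.cons false y) * ((if (false:Bool) = true then (1:ℝ) else -1) * chi S y)
      = -(f (Fin.cons false y) * chi S y) := by intro y; norm_num
  have e3 : ∀ y, f (Fin.cons true y) * ((if (true:Bool) = true then (1:ℝ) else -1) * chi S y)
      = f (Fin.cons true y) * chi S y := by intro y; norm_num
  simp only [h1, e2, e3, Finset.sum_neg_distrib]
  simp only [if_true, mul_one]
  rw [pow_succ]
  field_simp
  ring

lemma influence_rec :
    totalInfluence f = (totalInfluence (fun y => f (Fin.cons false y))
        + totalInfluence (fun y => f (Fin.cons true y))) / 2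
      + ∑ S : Finset (Fin n),
          (coeff (fun y => (f (Fin.cons true y) - f (Fin.cons false y))/2) S)^2 := by
  rw [totalInfluence, ← Function.Bijective.sum_comp emb_bijective
    (fun S => (S.card : ℝ) * coeff f S ^ 2)]
  rw [Fintype.sum_prod_type, Fintype.sum_bool]
  have hT : ∀ S : Finset (Fin n), emb (true, S) = insert 0 (up S) := fun S => if_pos rfl
  have hF : ∀ S : Finset (Fin n), emb (false, S) = up S := fun S => rfl
  simp only [hT, hF, card_up, card_insert_up, coeff_up_eq, coeff_insert_up_eq, coeff_comb]
  rw [totalInfluence, totalInfluence]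
  rw [← Finset.sum_add_distrib, ← Finset.sum_add_distrib, Finset.sum_div, ← Finset.sum_add_distrib]
  refine Finset.sum_congr rfl fun S _ => ?_
  push_cast
  ring

end Split

section Analysis

noncomputable def phi (x : ℝ) : ℝ := -(x * Real.logb 2 x)

lemma gfun_nonneg : ∀ t ∈ Set.Icc (0:ℝ) 1,
    0 ≤ (1+t) * Real.log (1+t) - t * Real.log t - 2 * Real.log 2 * t := by
  set G : ℝ → ℝ := fun t => (1+t) * Real.log (1+t) - t * Real.log t - 2 * Real.log 2 * t with hG
  have hcont : Continuous G := by
    apply Continuous.sub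
    apply Continuous.sub
    · exact (Real.continuous_mul_log.comp (continuous_const.add continuous_id))
    · exact Real.continuous_mul_log
    · exact continuous_const.mul continuous_id
  have hderiv : ∀ t : ℝ, 0 < t → HasDerivAt G (Real.log (1+t) - Real.log t - 2 * Real.log 2) t := by
    intro t ht
    have h1 : HasDerivAt (fun t : ℝ => (1+t) * Real.log (1+t)) (Real.log (1+t) + 1) t := by
      have := (Real.hasDerivAt_mul_log (x := 1+t) (by linarith)).comp t
        ((hasDerivAt_id t).const_add 1)
      rw [mul_one] at this; exact this
    have h2 : HasDerivAt (fun t : ℝ => t * Real.log t) (Real.log t + 1) t :=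
      Real.hasDerivAt_mul_log (ne_of_gt ht)
    have h3 : HasDerivAt (fun t : ℝ => 2 * Real.log 2 * t) (2 * Real.log 2) t := by
      simpa using (hasDerivAt_id t).const_mul (2 * Real.log 2)
    have := (h1.sub h2).sub h3
    rw [show Real.log (1+t) - Real.log t - 2 * Real.log 2
      = Real.log (1+t) + 1 - (Real.log t + 1) - 2 * Real.log 2 by ring]
    exact this
  have hmono : MonotoneOn G (Set.Icc 0 (1/3 : ℝ)) := by
    apply monotoneOn_of_deriv_nonneg (convex_Icc _ _) hcont.continuousOn
      (fun t ht => by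
        rw [interior_Icc] at ht
        exact (hderiv t ht.1).differentiableAt.differentiableWithinAt)
    intro t ht
    rw [interior_Icc] at ht
    obtain ⟨ht1, ht2⟩ := ht
    rw [(hderiv t ht1).deriv]
    have h4 : Real.log (4*t) ≤ Real.log (1+t) := by
      apply Real.log_le_log (by linarith) (by linarith)
    rw [Real.log_mul (by norm_num) (ne_of_gt ht1), show (4:ℝ) = 2^2 by norm_num,
      Real.log_pow] at h4
    push_cast at h4
    linarith
  have hanti : AntitoneOn G (Set.Icc (1/3 : ℝ) 1) := by
    apply antitoneOn_of_deriv_nonpos (convex_Icc _ _) hcont.continuousOn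
      (fun t ht => by
        rw [interior_Icc] at ht
        exact (hderiv t (by linarith [ht.1])).differentiableAt.differentiableWithinAt)
    intro t ht
    rw [interior_Icc] at ht
    obtain ⟨ht1', ht2⟩ := ht
    have ht1 : 0 < t := by linarith
    rw [(hderiv t ht1).deriv]
    have h4 : Real.log (1+t) ≤ Real.log (4*t) := by
      apply Real.log_le_log (by linarith) (by linarith)
    rw [Real.log_mul (by norm_num) (ne_of_gt ht1), show (4:ℝ) = 2^2 by norm_num,
      Real.log_pow] at h4
    push_cast at h4
    linarith
  have hG0 : G 0 = 0 := by simp [hG]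
  have hG1 : G 1 = 0 := by
    simp only [hG, Real.log_one]
    norm_num
  intro t ht
  by_cases h : t ≤ 1/3
  · have := hmono (Set.mem_Icc.mpr ⟨le_refl 0, by norm_num⟩) (Set.mem_Icc.mpr ⟨ht.1, h⟩) ht.1
    rw [hG0] at this
    exact this
  · push_neg at h
    have := hanti (Set.mem_Icc.mpr ⟨le_of_lt h, ht.2⟩) (Set.mem_Icc.mpr ⟨by norm_num, le_refl 1⟩) ht.2
    rw [hG1] at this
    exact this

lemma klog (a b : ℝ) (hb : 0 ≤ b) (hba : b ≤ a) (_ha : a ≤ 1) :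
    a * Real.log a + b * Real.log b + 2 * b * Real.log 2 ≤ (a+b) * Real.log (a+b) := by
  rcases eq_or_lt_of_le (hb.trans hba) with h | hapos
  · rw [← h]
    have : b = 0 := le_antisymm (h ▸ hba) hb
    simp [this]
  rcases eq_or_lt_of_le hb with h | hbpos
  · rw [← h]
    simp
  set t := b / a with htdef
  have ht0 : 0 < t := div_pos hbpos hapos
  have ht1 : t ≤ 1 := (div_le_one hapos).mpr hba
  have hbt : b = a * t := by rw [htdef, mul_div_assoc', eq_div_iff hapos.ne']; ring
  have key := gfun_nonneg t ⟨le_of_lt ht0, ht1⟩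
  have hlog1 : Real.log (a + b) = Real.log a + Real.log (1+t) := by
    rw [hbt, show a + a * t = a * (1 + t) by ring,
      Real.log_mul (ne_of_gt hapos) (by positivity)]
  have hlog2 : Real.log b = Real.log a + Real.log t := by
    rw [hbt, Real.log_mul (ne_of_gt hapos) (ne_of_gt ht0)]
  rw [hlog1, hlog2, hbt]
  nlinarith [key, hapos]

lemma claimK (a b : ℝ) (hb : 0 ≤ b) (hba : b ≤ a) (ha : a ≤ 1) :
    2 * phi ((a+b)/2) ≤ phi a + phi b + (a - b) := by
  have hlog2 : (0:ℝ) < Real.log 2 := Real.log_pos (by norm_num)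
  simp only [phi, Real.logb]
  rw [← sub_nonneg]
  rcases eq_or_lt_of_le (le_trans hb hba) with h | hapos
  · have hb0 : b = 0 := le_antisymm (h ▸ hba) hb
    rw [← h, hb0]
    norm_num
  have hm : Real.log ((a+b)/2) = Real.log (a+b) - Real.log 2 := by
    rw [Real.log_div (by positivity) (by norm_num)]
  have hk := klog a b hb hba ha
  rw [hm]
  have expand : -(a * (Real.log a / Real.log 2)) + -(b * (Real.log b / Real.log 2)) + (a - b)
      - 2 * -((a+b)/2 * ((Real.log (a+b) - Real.log 2) / Real.log 2))
      = ((a+b) * Real.log (a+b) - (a * Real.log a + b * Real.log b + 2*b*Real.log 2)) / Real.log 2 := by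
    field_simp
    ring
  rw [expand]
  apply div_nonneg (by linarith [hk]) (le_of_lt hlog2)

end Analysis

lemma main_ind : ∀ (n : ℕ) (f : (Fin n → Bool) → ℝ), IsBoolean f →
    2 * phi ((1 - coeff f ∅)/2) ≤ totalInfluence f := by
  intro n
  induction n with
  | zero =>
    intro f hf
    have hI : totalInfluence f = 0 := by
      rw [totalInfluence]
      apply Finset.sum_eq_zero
      intro S _
      have hS : S = ∅ := Finset.eq_empty_of_isEmpty S
      simp [hS]
    have hc : coeff f ∅ = f default := by
      rw [coeff]
      simp only [chi_empty, mul_one, pow_zero]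
      rw [Fintype.sum_unique]
      rw [div_one]
      exact congrArg f (Subsingleton.elim _ _)
    rw [hI, hc]
    rcases hf default with h | h <;> rw [h]
    · norm_num [phi]
    · norm_num [phi, Real.logb_one]
  | succ n ih =>
    intro f hf
    have hb0 : IsBoolean (fun y => f (Fin.cons false y)) := fun y => hf _
    have hb1 : IsBoolean (fun y => f (Fin.cons true y)) := fun y => hf _
    have hb0' : ∀ y, f (Fin.cons false y) = 1 ∨ f (Fin.cons false y) = -1 := fun y => hf _
    have hb1' : ∀ y, f (Fin.cons true y) = 1 ∨ f (Fin.cons true y) = -1 := fun y => hf _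
    have hrec := influence_rec f
    have hc : coeff f ∅ = (coeff (fun y => f (Fin.cons false y)) ∅
        + coeff (fun y => f (Fin.cons true y)) ∅) / 2 := by
      rw [← up_empty, coeff_up_eq]
    set μ0 := coeff (fun y => f (Fin.cons false y)) ∅ with hμ0
    set μ1 := coeff (fun y => f (Fin.cons true y)) ∅ with hμ1
    -- bounds on μ0 μ1
    have hsq0 : μ0^2 ≤ 1 := coeff_sq_le_one hb0 ∅
    have hsq1 : μ1^2 ≤ 1 := coeff_sq_le_one hb1 ∅
    have hμ0b : -1 ≤ μ0 ∧ μ0 ≤ 1 := ⟨by nlinarith, by nlinarith⟩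
    have hμ1b : -1 ≤ μ1 ∧ μ1 ≤ 1 := ⟨by nlinarith, by nlinarith⟩
    -- the cross term bound
    have hP : |μ1 - μ0|/2 ≤ ∑ S : Finset (Fin n),
        (coeff (fun y => (f (Fin.cons true y) - f (Fin.cons false y))/2) S)^2 := by
      have hgsq : ∀ y, ((f (Fin.cons true y) - f (Fin.cons false y))/2)^2
          = |(f (Fin.cons true y) - f (Fin.cons false y))/2| := by
        intro y
        rcases hb0' y with h | h <;> rcases hb1' y with h' | h' <;> rw [h, h'] <;> norm_num
      have h1 := parseval (fun y => (f (Fin.cons true y) - f (Fin.cons false y))/2)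
      have h2 : coeff (fun y => (f (Fin.cons true y) - f (Fin.cons false y))/2) ∅
          = (∑ y : Fin n → Bool, (f (Fin.cons true y) - f (Fin.cons false y))/2)/2^n := by
        rw [coeff]
        congr 1
        exact Finset.sum_congr rfl fun y _ => by rw [chi_empty, mul_one]
      have h3 : coeff (fun y => (f (Fin.cons true y) - f (Fin.cons false y))/2) ∅
          = (μ1 - μ0)/2 :=
        coeff_comb (fun y => f (Fin.cons true y)) (fun y => f (Fin.cons false y)) ∅
      have h4 : |μ1 - μ0|/2 = |coeff (fun y => (f (Fin.cons true y) - f (Fin.cons false y))/2) ∅| := by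
        rw [h3, abs_div]
        norm_num
      rw [h4, h1, h2, abs_div, abs_of_pos (show (0:ℝ) < 2^n by positivity)]
      rw [div_le_div_iff_of_pos_right (show (0:ℝ) < 2^n by positivity)]
      calc |∑ y : Fin n → Bool, (f (Fin.cons true y) - f (Fin.cons false y))/2|
          ≤ ∑ y : Fin n → Bool, |(f (Fin.cons true y) - f (Fin.cons false y))/2| :=
            Finset.abs_sum_le_sum_abs _ _
        _ = ∑ y : Fin n → Bool, ((f (Fin.cons true y) - f (Fin.cons false y))/2)^2 :=
            (Finset.sum_congr rfl fun y _ => (hgsq y).symm)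
    -- induction hypotheses
    have ihf0 := ih _ hb0
    have ihf1 := ih _ hb1
    rw [← hμ0] at ihf0
    rw [← hμ1] at ihf1
    -- the concavity-type claim
    have hcl : 2 * phi ((1 - coeff f ∅)/2)
        ≤ phi ((1-μ0)/2) + phi ((1-μ1)/2) + |μ1-μ0|/2 := by
      rw [hc, show (1 - (μ0+μ1)/2)/2 = (((1-μ0)/2) + ((1-μ1)/2))/2 by ring]
      rcases le_total μ0 μ1 with hle | hle
      · have habs : |μ1 - μ0|/2 = (1-μ0)/2 - (1-μ1)/2 := by
          rw [abs_of_nonneg (by linarith)]; ring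
        rw [habs]
        exact claimK ((1-μ0)/2) ((1-μ1)/2) (by linarith [hμ1b.2]) (by linarith)
          (by linarith [hμ0b.1])
      · have habs : |μ1 - μ0|/2 = (1-μ1)/2 - (1-μ0)/2 := by
          rw [abs_of_nonpos (by linarith)]; ring
        rw [habs, show (1-μ0)/2 + (1-μ1)/2 = (1-μ1)/2 + (1-μ0)/2 by ring]
        have := claimK ((1-μ1)/2) ((1-μ0)/2) (by linarith [hμ0b.2]) (by linarith)
          (by linarith [hμ1b.1])
        linarith [this]
    rw [hrec]
    linarith [hcl, ihf0, ihf1, hP]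

lemma final_chain {I β : ℝ} (hβpos : 0 < β) (hβ2 : β ≤ 1/2) (hphi : 2 * phi β ≤ I)
    (hVle : 4*β*(1-β) ≤ I) (hIlt : I < 1) :
    4*β*(1-β) * Real.logb 2 (1/I) ≤ 2*I := by
  have hVpos : 0 < 4*β*(1-β) := by nlinarith
  have hIpos : 0 < I := lt_of_lt_of_le hVpos hVle
  have h1 : Real.logb 2 (1/I) ≤ Real.logb 2 (1/(4*β*(1-β))) :=
    Real.logb_le_logb_of_le one_lt_two (by positivity)
      (one_div_le_one_div_of_le hVpos hVle)
  have hβne : (β:ℝ) ≠ 0 := ne_of_gt hβpos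
  have h1βpos : (0:ℝ) < 1-β := by linarith
  have hlog4 : Real.logb 2 (4:ℝ) = 2 := by
    rw [show (4:ℝ) = 2^(2:ℕ) by norm_num, Real.logb_pow, Real.logb_self_eq_one one_lt_two]
    norm_num
  have hlogV : Real.logb 2 (1/(4*β*(1-β)))
      = -(2 + Real.logb 2 β + Real.logb 2 (1-β)) := by
    rw [one_div, Real.logb_inv, Real.logb_mul (by positivity) (ne_of_gt h1βpos),
      Real.logb_mul (by norm_num) hβne, hlog4]
  have hLb : 1 ≤ -(Real.logb 2 β) := by
    have h := Real.logb_le_logb_of_le one_lt_two hβpos hβ2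
    rw [show (1:ℝ)/2 = 2⁻¹ by norm_num, Real.logb_inv,
      Real.logb_self_eq_one one_lt_two] at h
    linarith
  have hM : -(Real.logb 2 (1-β)) ≤ 2 := by
    have h := Real.logb_le_logb_of_le one_lt_two (show (0:ℝ) < 1/4 by norm_num)
      (show (1:ℝ)/4 ≤ 1-β by linarith)
    rw [show (1:ℝ)/4 = ((4:ℝ))⁻¹ by norm_num, Real.logb_inv, hlog4] at h
    linarith
  have hphi' : phi β = β * (-(Real.logb 2 β)) := by rw [phi]; ring
  have key : (1-β) * ((-(Real.logb 2 β)) + (-(Real.logb 2 (1-β))) - 2)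
      ≤ -(Real.logb 2 β) := by
    nlinarith [mul_nonneg (le_of_lt h1βpos)
        (show (0:ℝ) ≤ 2 - (-(Real.logb 2 (1-β))) by linarith),
      mul_nonneg hβpos.le (show (0:ℝ) ≤ -(Real.logb 2 β) by linarith)]
  calc 4*β*(1-β) * Real.logb 2 (1/I)
      ≤ 4*β*(1-β) * Real.logb 2 (1/(4*β*(1-β))) :=
        mul_le_mul_of_nonneg_left h1 (le_of_lt hVpos)
    _ = 4*β*((1-β) * ((-(Real.logb 2 β)) + (-(Real.logb 2 (1-β))) - 2)) := by
        rw [hlogV]; ring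
    _ ≤ 4*β*(-(Real.logb 2 β)) := mul_le_mul_of_nonneg_left key (by positivity)
    _ = 2*(2*phi β) := by rw [hphi']; ring
    _ ≤ 2*I := by linarith

theorem var_le_influence_over_log {n : ℕ} (f : (Fin n → Bool) → ℝ) (hf : IsBoolean f)
    (hI : totalInfluence f < 1) :
    fVar f ≤ 2 * (totalInfluence f / Real.logb 2 (1 / totalInfluence f)) := by
  have hIload := var_le_influence hf
  have hInn := influence_nonneg f
  have hμsq := coeff_sq_le_one hf ∅
  have hVnn : 0 ≤ fVar f := by rw [fVar]; nlinarith
  rcases eq_or_lt_of_le hVnn with hV | hV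
  · rw [← hV]
    rcases eq_or_lt_of_le hInn with hI0 | hI0
    · rw [← hI0]
      norm_num
    · have hL : 0 < Real.logb 2 (1/totalInfluence f) :=
        Real.logb_pos one_lt_two ((one_lt_div hI0).mpr hI)
      have : 0 ≤ totalInfluence f / Real.logb 2 (1/totalInfluence f) :=
        div_nonneg hInn hL.le
      linarith
  · have hVI : fVar f ≤ totalInfluence f := by rw [fVar]; exact hIload
    have hIpos : 0 < totalInfluence f := lt_of_lt_of_le hV hVI
    have hL : 0 < Real.logb 2 (1/totalInfluence f) :=
      Real.logb_pos one_lt_two ((one_lt_div hIpos).mpr hI)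
    rw [show 2 * (totalInfluence f / Real.logb 2 (1/totalInfluence f))
        = (2*totalInfluence f)/(Real.logb 2 (1/totalInfluence f)) by ring,
      le_div_iff₀ hL]
    have hmain0 := main_ind n f hf
    have hmain1 := main_ind n (fun x => -(f x)) (isBoolean_neg hf)
    rw [influence_neg, coeff_neg] at hmain1
    have hmain1' : 2 * phi ((1 + coeff f ∅)/2) ≤ totalInfluence f := by
      rw [show (1 + coeff f ∅)/2 = (1 - -coeff f ∅)/2 by ring]
      exact hmain1
    have hμb : -1 ≤ coeff f ∅ ∧ coeff f ∅ ≤ 1 := ⟨by nlinarith, by nlinarith⟩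
    rcases le_total ((1 - coeff f ∅)/2) ((1 + coeff f ∅)/2) with hcmp | hcmp
    · -- β = (1 - μ)/2
      have hVeq : fVar f = 4*((1 - coeff f ∅)/2)*(1-((1 - coeff f ∅)/2)) := by
        rw [fVar]; ring
      have hβpos : 0 < (1 - coeff f ∅)/2 := by
        by_contra hcon
        push_neg at hcon
        have : fVar f ≤ 0 := by rw [hVeq]; nlinarith [hμb.1]
        linarith
      rw [hVeq]
      exact final_chain hβpos (by linarith) hmain0 (by rw [← hVeq]; exact hVI) hI
    · -- β = (1 + μ)/2
      have hVeq : fVar f = 4*((1 + coeff f ∅)/2)*(1-((1 + coeff f ∅)/2)) := by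
        rw [fVar]; ring
      have hβpos : 0 < (1 + coeff f ∅)/2 := by
        by_contra hcon
        push_neg at hcon
        have : fVar f ≤ 0 := by rw [hVeq]; nlinarith [hμb.2]
        linarith
      rw [hVeq]
      exact final_chain hβpos (by linarith) hmain1' (by rw [← hVeq]; exact hVI) hI
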